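/- Let α ≥ 1, z ∈ ℝ^α and θ ∈ ℝ. Then Q₀₀[z](θ) = Σ_{l=0}^{⌈α/2⌉} ( Σ_{y ∈ Ξ_l^α} (−i)^{wt(y)} ζ_y(z) ) cos(lθ). In particular, z ↦ Q₀₀[z](θ) is determined by these Fourier coefficients and θ ↦ Q₀₀[z](θ) is a cosine polynomial of degree at most ⌈α/2⌉. -/

import Mathlib

noncomputable section

/-- The Pauli matrix `X = !![0,1;1,0]`. -/
def Xm : Matrix (Fin 2) (Fin 2) ℂ := !![0, 1; 1, 0]

/-- The Pauli matrix `Z = !![1,0;0,−1]`. -/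
def Zm : Matrix (Fin 2) (Fin 2) ℂ := !![1, 0; 0, -1]

/-- `P(θ) = cos θ • Z + sin θ • X`. -/
def Pmat (θ : ℝ) : Matrix (Fin 2) (Fin 2) ℂ :=
  (Real.cos θ : ℂ) • Zm + (Real.sin θ : ℂ) • Xm

/-- `U(θ;α) = cos α • I − i sin α • P(θ)`. -/
def Umat (θ a : ℝ) : Matrix (Fin 2) (Fin 2) ℂ :=
  (Real.cos a : ℂ) • (1 : Matrix (Fin 2) (Fin 2) ℂ) - (Complex.I * (Real.sin a : ℂ)) • Pmat θ

/-- `V(β) = cos β • I − i sin β • Z`. -/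
def Vmat (b : ℝ) : Matrix (Fin 2) (Fin 2) ℂ :=
  (Real.cos b : ℂ) • (1 : Matrix (Fin 2) (Fin 2) ℂ) - (Complex.I * (Real.sin b : ℂ)) • Zm

/-- Auxiliary recursion for `Q(θ;z)`: the boolean flag records whether the position of
the head of the list is odd (odd positions use `U(θ;·)`, even positions use `V(·)`);
the head of the list is the *rightmost* factor. -/
def Qaux (θ : ℝ) : Bool → List ℝ → Matrix (Fin 2) (Fin 2) ℂ
  | _, [] => 1
  | odd, z :: rest => Qaux θ (!odd) rest * (if odd then Umat θ z else Vmat z)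

/-- `Q(θ; (z₁,…,z_m)) = R_m(z_m) ⋯ R₂(z₂) R₁(z₁)` with `R_j = U(θ;·)` for odd `j` and
`R_j = V(·)` for even `j`. -/
def Qmat (θ : ℝ) (zs : List ℝ) : Matrix (Fin 2) (Fin 2) ℂ := Qaux θ true zs

end

/-- The generator `p` of the infinite dihedral group `C₂ * C₂`, realized as the
reflection `sr 0` in `DihedralGroup 0`. -/
def pgen : DihedralGroup 0 := DihedralGroup.sr 0

/-- The generator `q` of the infinite dihedral group `C₂ * C₂`, realized as the
reflection `sr 1` in `DihedralGroup 0`. -/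
def qgen : DihedralGroup 0 := DihedralGroup.sr 1

/-- `g^b` for a bit `b`: `g⁰ = 1`, `g¹ = g`. -/
def bpow (g : DihedralGroup 0) (b : Bool) : DihedralGroup 0 := if b then g else 1

/-- The generator at (0-based) index `i`, i.e. at 1-based position `i+1`:
`q` at odd positions, `p` at even positions. -/
def genAt (i : ℕ) : DihedralGroup 0 := if i % 2 = 0 then qgen else pgen

/-- The word `w(x) = r_n^{x_n} ⋯ r_2^{x_2} r_1^{x_1}` associated with a bit string
`x = x₁…x_n`, where `r_i = q` if `i` is odd and `r_i = p` if `i` is even. -/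
def wword {n : ℕ} (x : Fin n → Bool) : DihedralGroup 0 :=
  ((List.finRange n).reverse.map (fun i => bpow (genAt i.val) (x i))).prod

/-- The reduced word `t(u,k,v) = p^u (qp)^k q^v`. -/
def tword (u : Bool) (k : ℕ) (v : Bool) : DihedralGroup 0 :=
  bpow pgen u * (qgen * pgen) ^ k * bpow qgen v

/-- `Θⁿ_{ukv}` : the set of bit strings `x` of length `n` with `w(x) = p^u (qp)^k q^v`,
empty by convention when `k < 0`. -/
def Theta (n : ℕ) (u : Bool) (k : ℤ) (v : Bool) : Finset (Fin n → Bool) :=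
  if k < 0 then ∅ else Finset.univ.filter (fun x => wword x = tword u k.toNat v)

/-- `Ξ_l^α = Θ^α_{0,l,0} ∪ Θ^α_{1,l,0} ∪ Θ^α_{0,l−1,1} ∪ Θ^α_{1,l−1,1}`. -/
def Xi (α l : ℕ) : Finset (Fin α → Bool) :=
  Theta α false l false ∪ Theta α true l false ∪
    Theta α false ((l : ℤ) - 1) true ∪ Theta α true ((l : ℤ) - 1) true

/-- `ζ_y(x) = ∏_{a: y_a=0} cos(x_a) · ∏_{b: y_b=1} sin(x_b)`. -/
noncomputable def zeta {k : ℕ} (y : Fin k → Bool) (x : Fin k → ℝ) : ℝ :=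
  ∏ i, (if y i then Real.sin (x i) else Real.cos (x i))

/-- The Hamming weight of a bit string. -/
def hwt {k : ℕ} (y : Fin k → Bool) : ℕ := (Finset.univ.filter (fun i => y i = true)).card


open DihedralGroup

/-! ### Auxiliary development -/

section Aux

def zi (i : ZMod 0) : ℤ := i
def ic (m : ℤ) : ZMod 0 := m
lemma zi_add (i j : ZMod 0) : zi (i+j) = zi i + zi j := rfl
lemma zi_sub (i j : ZMod 0) : zi (i-j) = zi i - zi j := rfl
lemma zi_ic (m : ℤ) : zi (ic m) = m := rfl
lemma ic_add (a b : ℤ) : ic a + ic b = ic (a+b) := rfl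
lemma zero_eq_ic : (0 : ZMod 0) = ic 0 := rfl

noncomputable def rho (θ : ℝ) : DihedralGroup 0 → Matrix (Fin 2) (Fin 2) ℂ
  | .r i => !![(Real.cos (zi i * θ) : ℂ), (Real.sin (zi i * θ) : ℂ);
               (-Real.sin (zi i * θ) : ℂ), (Real.cos (zi i * θ) : ℂ)]
  | .sr i => !![(Real.cos (zi i * θ) : ℂ), (Real.sin (zi i * θ) : ℂ);
               (Real.sin (zi i * θ) : ℂ), (-Real.cos (zi i * θ) : ℂ)]

lemma rho_mul (θ : ℝ) (a b : DihedralGroup 0) : rho θ (a*b) = rho θ a * rho θ b := by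
  cases a <;> cases b <;>
    · simp only [r_mul_r, r_mul_sr, sr_mul_r, sr_mul_sr, rho, Matrix.mul_fin_two,
        zi_add, zi_sub]
      ext i j
      fin_cases i <;> fin_cases j <;>
      · simp only [Matrix.cons_val', Matrix.cons_val_zero, Matrix.cons_val_one, Matrix.head_cons,
          Matrix.head_fin_const, Matrix.empty_val', Matrix.cons_val_fin_one]
        push_cast
        simp only [add_mul, sub_mul, Complex.cos_add, Complex.sin_add, Complex.cos_sub,
          Complex.sin_sub]
        ring_nf

lemma rho_one (θ : ℝ) : rho θ 1 = 1 := by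
  rw [DihedralGroup.one_def]
  show rho θ (.r (ic 0)) = 1
  simp [rho, zi_ic, Matrix.one_fin_two]

lemma rho_pgen (θ : ℝ) : rho θ pgen = Zm := by
  show rho θ (.sr (ic 0)) = Zm
  simp [rho, zi_ic, Zm]

lemma rho_qgen (θ : ℝ) : rho θ qgen = Pmat θ := by
  show rho θ (.sr (ic 1)) = Pmat θ
  ext i j
  fin_cases i <;> fin_cases j <;>
    simp [rho, zi_ic, Pmat, Zm, Xm, Matrix.smul_apply]

def ell : DihedralGroup 0 → ℕ
  | .r i => (zi i).natAbs
  | .sr i => (zi i).natAbs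

def len : DihedralGroup 0 → ℕ
  | .r i => 2 * (zi i).natAbs
  | .sr i => if 0 < zi i then 2 * (zi i).natAbs - 1 else 2 * (zi i).natAbs + 1

lemma rho_00 (θ : ℝ) (g : DihedralGroup 0) :
    rho θ g 0 0 = (Real.cos (ell g * θ) : ℂ) := by
  have key : ∀ k : ℤ, Real.cos ((k.natAbs : ℝ) * θ) = Real.cos ((k : ℝ) * θ) := by
    intro k
    rw [Nat.cast_natAbs, Int.cast_abs]
    rcases abs_cases ((k : ℝ)) with ⟨h, _⟩ | ⟨h, _⟩ <;> rw [h]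
    rw [neg_mul, Real.cos_neg]
  cases g <;> simp only [rho, ell, key] <;> simp

lemma len_mul_gen (g : DihedralGroup 0) (j : ZMod 0) (hj : zi j = 0 ∨ zi j = 1) :
    len (g * DihedralGroup.sr j) ≤ len g + 1 := by
  cases g <;> simp only [r_mul_sr, sr_mul_sr, len, zi_sub] <;>
    rcases hj with h | h <;> simp only [h] <;> split_ifs <;> omega

lemma two_ell_le (g : DihedralGroup 0) : 2 * ell g ≤ len g + 1 := by
  cases g <;> simp only [ell, len] <;> first | omega | (split_ifs <;> omega)

/-! Word machinery -/

def wwordFrom (s : ℕ) {n : ℕ} (x : Fin n → Bool) : DihedralGroup 0 :=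
  ((List.finRange n).reverse.map (fun i => bpow (genAt (s + i.val)) (x i))).prod

lemma wwordFrom_zero {n : ℕ} (x : Fin n → Bool) : wwordFrom 0 x = wword x := by
  unfold wwordFrom wword
  congr 1
  apply List.map_congr_left
  intro i _
  norm_num

lemma wwordFrom_cons (s : ℕ) {n : ℕ} (b : Bool) (y : Fin n → Bool) :
    wwordFrom s (Fin.cons b y) = wwordFrom (s+1) y * bpow (genAt s) b := by
  simp only [wwordFrom, List.finRange_succ, List.reverse_cons, List.map_append,
    List.map_map, List.prod_append, ← List.map_reverse]
  congr 1
  · congr 1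
    apply List.map_congr_left
    intro i _
    simp only [Function.comp_apply, Fin.cons_succ, Fin.val_succ]
    congr 2
    omega
  · simp [Fin.cons_zero]

lemma genAt_cases (s : ℕ) : ∃ j : ZMod 0, genAt s = DihedralGroup.sr j ∧ (zi j = 0 ∨ zi j = 1) := by
  by_cases h : s % 2 = 0
  · exact ⟨1, by simp [genAt, h, qgen], Or.inr rfl⟩
  · exact ⟨0, by simp [genAt, h, pgen], Or.inl rfl⟩

lemma len_wwordFrom : ∀ (n s : ℕ) (y : Fin n → Bool), len (wwordFrom s y) ≤ n := by
  intro n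
  induction n with
  | zero =>
    intro s y
    show len ((([] : List (Fin 0)).reverse.map _).prod) ≤ 0
    simp only [List.reverse_nil, List.map_nil, List.prod_nil]
    rw [DihedralGroup.one_def]
    show len (.r (ic 0)) ≤ 0
    simp [len, zi_ic]
  | succ n ih =>
    intro s y
    rw [← Fin.cons_self_tail y, wwordFrom_cons]
    obtain ⟨j, hj, hj01⟩ := genAt_cases s
    cases hb : y 0 with
    | false =>
      simp only [bpow, Bool.false_eq_true, if_false, mul_one]
      exact le_trans (ih (s+1) _) (Nat.le_succ n)
    | true =>
      simp only [bpow, if_true, hj]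
      calc len (wwordFrom (s+1) (Fin.tail y) * DihedralGroup.sr j)
          ≤ len (wwordFrom (s+1) (Fin.tail y)) + 1 := len_mul_gen _ j hj01
        _ ≤ n + 1 := by have := ih (s+1) (Fin.tail y); omega

end Aux


section Aux2

lemma ic_sub (a b : ℤ) : ic a - ic b = ic (a-b) := rfl
lemma one_eq_ic : (1 : ZMod 0) = ic 1 := rfl

lemma qp_pow (k : ℕ) : (qgen * pgen) ^ k = .r (ic (-(k:ℤ))) := by
  induction k with
  | zero => rw [pow_zero, DihedralGroup.one_def]; rfl
  | succ k ih =>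
    have h1 : qgen * pgen = DihedralGroup.r (ic (-1)) := rfl
    rw [pow_succ, ih, h1, r_mul_r, ic_add]
    congr 1; push_cast; ring_nf

lemma tword_ff (k : ℕ) : tword false k false = .r (ic (-(k:ℤ))) := by
  unfold tword; rw [qp_pow]; simp [bpow]

lemma zi_one : zi 1 = 1 := rfl
lemma zi_zero : zi 0 = 0 := rfl

lemma eR (i : ZMod 0) (m : ℤ) (h : zi i = m) : DihedralGroup.r i = .r (ic m) := by
  subst h; rfl

lemma eS (i : ZMod 0) (m : ℤ) (h : zi i = m) : DihedralGroup.sr i = .sr (ic m) := by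
  subst h; rfl

lemma tword_tf (k : ℕ) : tword true k false = .sr (ic (-(k:ℤ))) := by
  unfold tword; rw [qp_pow]
  simp only [bpow, if_true, Bool.false_eq_true, if_false, mul_one, pgen, sr_mul_r]
  exact eS _ _ (by rw [zi_add, zi_zero, zi_ic]; ring)

lemma tword_ft (k : ℕ) : tword false k true = .sr (ic ((k:ℤ)+1)) := by
  unfold tword; rw [qp_pow]
  simp only [bpow, if_true, Bool.false_eq_true, if_false, one_mul, qgen, r_mul_sr]
  exact eS _ _ (by rw [zi_sub, zi_one, zi_ic]; ring)

lemma tword_tt (k : ℕ) : tword true k true = .r (ic ((k:ℤ)+1)) := by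
  unfold tword; rw [qp_pow]
  simp only [bpow, if_true, pgen, qgen, sr_mul_r, sr_mul_sr]
  exact eR _ _ (by rw [zi_sub, zi_one, zi_add, zi_zero, zi_ic]; ring)

lemma ell_eq_iff (g : DihedralGroup 0) (l : ℕ) :
    ell g = l ↔ (g = tword false l false ∨ g = tword true l false ∨
      (1 ≤ l ∧ (g = tword false (l-1) true ∨ g = tword true (l-1) true))) := by
  constructor
  · intro h
    cases g with
    | r i =>
      simp only [ell] at h
      rcases Int.natAbs_eq (zi i) with hi | hi
      · by_cases hl : l = 0
        · subst hl; left; rw [tword_ff]; exact eR i _ (by omega)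
        · right; right
          refine ⟨by omega, Or.inr ?_⟩
          rw [tword_tt]; exact eR i _ (by omega)
      · left; rw [tword_ff]; exact eR i _ (by omega)
    | sr i =>
      simp only [ell] at h
      rcases Int.natAbs_eq (zi i) with hi | hi
      · by_cases hl : l = 0
        · subst hl; right; left; rw [tword_tf]; exact eS i _ (by omega)
        · right; right
          refine ⟨by omega, Or.inl ?_⟩
          rw [tword_ft]; exact eS i _ (by omega)
      · right; left; rw [tword_tf]; exact eS i _ (by omega)
  · rintro (h | h | ⟨hl, h | h⟩) <;> subst h
    · rw [tword_ff]; simp only [ell, zi_ic]; omega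
    · rw [tword_tf]; simp only [ell, zi_ic]; omega
    · rw [tword_ft]; simp only [ell, zi_ic]; omega
    · rw [tword_tt]; simp only [ell, zi_ic]; omega

lemma Xi_eq (n l : ℕ) :
    Xi n l = Finset.univ.filter (fun y => ell (wword y) = l) := by
  have h0 : ¬ ((l:ℤ) < 0) := by omega
  ext y
  simp only [Finset.mem_filter, Finset.mem_univ, true_and, ell_eq_iff]
  by_cases hl : l = 0
  · subst hl
    have h1 : ((0:ℕ):ℤ) - 1 < 0 := by omega
    simp only [Xi, Theta, if_neg h0, if_pos h1, Finset.mem_union, Finset.mem_filter,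
      Finset.mem_univ, true_and, Finset.notMem_empty, or_false, Int.toNat_natCast]
    constructor
    · rintro (h | h) <;> tauto
    · rintro (h | h | ⟨hl, _⟩)
      · tauto
      · tauto
      · omega
  · have h1 : ¬ ((l:ℤ) - 1 < 0) := by omega
    have h2 : ((l:ℤ)).toNat = l := by omega
    have h3 : ((l:ℤ) - 1).toNat = l - 1 := by omega
    simp only [Xi, Theta, if_neg h0, if_neg h1, Finset.mem_union, Finset.mem_filter,
      Finset.mem_univ, true_and, h2, h3]
    have hl1 : 1 ≤ l := by omega
    constructor
    · rintro (((h | h) | h) | h) <;> tauto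
    · rintro (h | h | ⟨_, h | h⟩) <;> tauto

lemma hwt_cons {n : ℕ} (b : Bool) (y : Fin n → Bool) :
    hwt (Fin.cons b y) = (if b then 1 else 0) + hwt y := by
  unfold hwt
  rw [Finset.card_filter, Finset.card_filter, Fin.sum_univ_succ]
  simp [Fin.cons_zero, Fin.cons_succ]

lemma zeta_cons {n : ℕ} (b : Bool) (y : Fin n → Bool) (z : Fin (n+1) → ℝ) :
    zeta (Fin.cons b y) z
      = (if b then Real.sin (z 0) else Real.cos (z 0)) * zeta y (fun i => z i.succ) := by
  unfold zeta
  rw [Fin.prod_univ_succ]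
  simp [Fin.cons_zero, Fin.cons_succ]

lemma expand (θ : ℝ) : ∀ (n s : ℕ) (z : Fin n → ℝ),
    Qaux θ (decide (s % 2 = 0)) (List.ofFn z)
      = ∑ y : Fin n → Bool,
          ((-Complex.I) ^ hwt y * (zeta y z : ℂ)) • rho θ (wwordFrom s y) := by
  intro n
  induction n with
  | zero =>
    intro s z
    rw [List.ofFn_zero]
    rw [Fintype.sum_subsingleton _ (fun i : Fin 0 => false)]
    show (1 : Matrix (Fin 2) (Fin 2) ℂ) = _
    have hw : wwordFrom s (fun i : Fin 0 => false) = 1 := by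
      unfold wwordFrom; simp
    rw [hw, rho_one]
    simp [hwt, zeta]
  | succ n ih =>
    intro s z
    rw [List.ofFn_succ]
    show Qaux θ (!decide (s % 2 = 0)) (List.ofFn fun i => z i.succ)
        * (if decide (s % 2 = 0) then Umat θ (z 0) else Vmat (z 0)) = _
    have hflag : (!decide (s % 2 = 0)) = decide ((s+1) % 2 = 0) := by
      rcases Nat.mod_two_eq_zero_or_one s with h | h <;> simp [h, Nat.add_mod]
    have hM : (if decide (s % 2 = 0) then Umat θ (z 0) else Vmat (z 0))
        = (Real.cos (z 0) : ℂ) • (1 : Matrix (Fin 2) (Fin 2) ℂ)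
          - (Complex.I * (Real.sin (z 0) : ℂ)) • rho θ (genAt s) := by
      by_cases h : s % 2 = 0 <;> simp [h, genAt, Umat, Vmat, rho_qgen, rho_pgen]
    rw [hflag, hM, ih (s+1) (fun i => z i.succ), Finset.sum_mul]
    rw [← Equiv.sum_comp (Fin.consEquiv (fun _ : Fin (n+1) => Bool))
      (fun y => ((-Complex.I) ^ hwt y * (zeta y z : ℂ)) • rho θ (wwordFrom s y))]
    rw [Fintype.sum_prod_type, Fintype.sum_bool, ← Finset.sum_add_distrib]
    apply Finset.sum_congr rfl
    intro y _
    have hce : ∀ b : Bool, (Fin.consEquiv fun _ : Fin (n+1) => Bool) (b, y) = Fin.cons b y :=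
      fun _ => rfl
    rw [hce, hce]
    rw [wwordFrom_cons, wwordFrom_cons, rho_mul, rho_mul, hwt_cons, hwt_cons,
      zeta_cons, zeta_cons]
    simp only [bpow, if_true, if_false, Bool.false_eq_true, mul_one, rho_one,
      Matrix.mul_one, pow_add, pow_one, pow_zero]
    push_cast
    rw [Matrix.smul_mul, mul_sub, Matrix.mul_smul, Matrix.mul_one, Matrix.mul_smul]
    rw [smul_sub, smul_smul, smul_smul]
    rw [sub_eq_add_neg, add_comm, ← neg_smul]
    congr 1 <;> congr 1 <;> ring

end Aux2

/-- the Fourier-cosine expansion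
`Q₀₀[z](θ) = Σ_{l=0}^{⌈α/2⌉} (Σ_{y ∈ Ξ_l^α} (−i)^{wt(y)} ζ_y(z)) cos(lθ)`. -/
theorem statement17 (α : ℕ) (hα : 1 ≤ α) (z : Fin α → ℝ) (θ : ℝ) :
    Qmat θ (List.ofFn z) 0 0
      = ∑ l ∈ Finset.range ((α + 1) / 2 + 1),
          (∑ y ∈ Xi α l, (-Complex.I) ^ hwt y * (zeta y z : ℂ)) *
            (Real.cos (l * θ) : ℂ) := by
  have hwb : ∀ y : Fin α → Bool, ell (wword y) < (α+1)/2 + 1 := by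
    intro y
    have h1 := two_ell_le (wword y)
    have h2 : len (wword y) ≤ α := by
      rw [← wwordFrom_zero]; exact len_wwordFrom α 0 y
    omega
  have h0 : Qmat θ (List.ofFn z) = Qaux θ (decide ((0:ℕ) % 2 = 0)) (List.ofFn z) := rfl
  rw [h0, expand θ α 0 z, Matrix.sum_apply]
  have hL : ∀ y : Fin α → Bool,
      (((-Complex.I) ^ hwt y * (zeta y z : ℂ)) • rho θ (wwordFrom 0 y)) 0 0
        = ((-Complex.I) ^ hwt y * (zeta y z : ℂ))
            * (Real.cos ((ell (wword y) : ℝ) * θ) : ℂ) := by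
    intro y
    rw [Matrix.smul_apply, wwordFrom_zero, rho_00, smul_eq_mul]
  rw [Finset.sum_congr rfl (fun y _ => hL y)]
  rw [← Finset.sum_fiberwise_of_maps_to (g := fun y => ell (wword y))
    (t := Finset.range ((α+1)/2+1)) (fun y _ => Finset.mem_range.mpr (hwb y))]
  apply Finset.sum_congr rfl
  intro l _
  rw [Xi_eq, Finset.sum_mul]
  apply Finset.sum_congr rfl
  intro y hy
  rw [(Finset.mem_filter.mp hy).2]
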